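/- Let f : ℝⁿ → ℝ be differentiable with L-Lipschitz continuous gradient (L > 0), let l ∈ ℝ be such that f + (l/2)‖·‖² is convex, and let γ > 0 with γl < 1. Suppose (u^t, v^t, x^t) are PDR iterates with g(v^t) finite. Then for all t ≥ 1, M_γ(u^{t+1}, v^t, x^t) − M_γ(u^t, v^t, x^t) ≤ [ −(1/2)(1/γ − l) + (2−α)/γ + ((2−α)/(2γ))(−1 + 2γl) + ((2−α)/(2γ))(1 + γL)² ]·‖u^{t+1} − u^t‖². -/

import Mathlib

open scoped InnerProductSpace RealInnerProductSpace
open Filter Topology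

variable {n : ℕ}

local notation "E" => EuclideanSpace ℝ (Fin n)

lemma hasGradientAt_add' {f₁ f₂ : E → ℝ} {g₁ g₂ : E} {x : E}
    (h₁ : HasGradientAt f₁ g₁ x) (h₂ : HasGradientAt f₂ g₂ x) :
    HasGradientAt (fun y => f₁ y + f₂ y) (g₁ + g₂) x := by
  rw [hasGradientAt_iff_hasFDerivAt] at *
  rw [map_add]
  exact h₁.add h₂

lemma hasGradientAt_quad (c : ℝ) (X w : E) :
    HasGradientAt (fun y => c * ‖y - X‖^2) ((2*c) • (w - X)) w := by
  have h0 : HasFDerivAt (fun y : E => y - X) (ContinuousLinearMap.id ℝ E) w :=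
    (hasFDerivAt_id w).sub_const X
  have h2 := (h0.norm_sq).const_mul c
  rw [hasGradientAt_iff_hasFDerivAt]
  convert h2 using 2
  · ext y
    simp [InnerProductSpace.toDual_apply_apply, real_inner_smul_left, two_smul]
  · ext y
    simp [InnerProductSpace.toDual_apply_apply, real_inner_smul_left, two_smul]
    ring

lemma grad_of_min (γ : ℝ) (hγ : 0 < γ) (f : E → ℝ)
    (hf : Differentiable ℝ f) (X u₀ : E)
    (hmin : ∀ w, f u₀ + (1/(2*γ)) * ‖u₀ - X‖^2 ≤ f w + (1/(2*γ)) * ‖w - X‖^2) :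
    gradient f u₀ = (1/γ) • (X - u₀) := by
  have hg : HasGradientAt (fun w => f w + (1/(2*γ)) * ‖w - X‖^2)
      (gradient f u₀ + (2*(1/(2*γ))) • (u₀ - X)) u₀ :=
    hasGradientAt_add' (hf u₀).hasGradientAt (hasGradientAt_quad (1/(2*γ)) X u₀)
  have hloc : IsLocalMin (fun w => f w + (1/(2*γ)) * ‖w - X‖^2) u₀ :=
    Filter.Eventually.of_forall hmin
  have h0 : gradient f u₀ + (2*(1/(2*γ))) • (u₀ - X) = 0 := by
    have hz := hloc.hasFDerivAt_eq_zero (hasGradientAt_iff_hasFDerivAt.mp hg)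
    exact (LinearIsometryEquiv.map_eq_zero_iff _).mp hz
  have h2 : (2*(1/(2*γ))) = 1/γ := by field_simp
  rw [h2] at h0
  have := eq_neg_of_add_eq_zero_left h0
  rw [this, ← smul_neg, neg_sub]

lemma subgrad {h : E → ℝ} (hd : Differentiable ℝ h)
    (hc : ConvexOn ℝ Set.univ h) (a b : E) :
    h a + ⟪gradient h a, b - a⟫_ℝ ≤ h b := by
  set φ : ℝ → ℝ := fun s => h (AffineMap.lineMap a b s) with hφ
  have hφc : ConvexOn ℝ Set.univ φ := by
    have := hc.comp_affineMap (AffineMap.lineMap a b : ℝ →ᵃ[ℝ] E)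
    exact this
  have hline : HasDerivAt (fun s : ℝ => (AffineMap.lineMap a b : ℝ →ᵃ[ℝ] E) s) (b - a) 0 := by
    simp only [AffineMap.lineMap_apply_module']
    simpa using ((hasDerivAt_id (0:ℝ)).smul_const (b - a)).add_const a
  have hfd : HasFDerivAt h (InnerProductSpace.toDual ℝ _ (gradient h a)) a :=
    hasGradientAt_iff_hasFDerivAt.mp (hd a).hasGradientAt
  have hfd' : HasFDerivAt h (InnerProductSpace.toDual ℝ _ (gradient h a))
      ((AffineMap.lineMap a b : ℝ →ᵃ[ℝ] E) (0:ℝ)) := by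
    rwa [AffineMap.lineMap_apply_zero]
  have hφd : HasDerivAt φ ⟪gradient h a, b - a⟫_ℝ 0 := by
    have := hfd'.comp_hasDerivAt 0 hline
    simp [hφ, Function.comp, InnerProductSpace.toDual_apply_apply] at this ⊢
    exact this
  have hs := hφc.le_slope_of_hasDerivAt (Set.mem_univ (0:ℝ)) (Set.mem_univ (1:ℝ))
    one_pos hφd
  have h0 : φ 0 = h a := by simp [hφ]
  have h1 : φ 1 = h b := by simp [hφ]
  rw [slope_def_field] at hs
  simp only [h0, h1] at hs
  -- hs : ⟪gradient h a, b - a⟫ ≤ (h b - h a) / (1 - 0)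
  have : ⟪gradient h a, b - a⟫_ℝ ≤ h b - h a := by simpa using hs
  linarith

lemma grad_reg (l : ℝ) (f : E → ℝ) (hf : Differentiable ℝ f) (a : E) :
    gradient (fun w : E => f w + (l/2) * ‖w‖^2) a = gradient f a + l • a := by
  have hq : HasGradientAt (fun y : E => (l/2) * ‖y‖^2) (l • a) a := by
    have h := hasGradientAt_quad (l/2) 0 a
    have h2 : (2*(l/2)) • (a - (0:E)) = l • a := by
      rw [sub_zero, show (2:ℝ)*(l/2) = l by ring]
    rw [h2] at h
    simpa using h
  exact (hasGradientAt_add' (hf a).hasGradientAt hq).gradient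

set_option maxHeartbeats 1000000 in
lemma core (γ α l L : ℝ) (hγ : 0 < γ) (hα2 : α ≤ 2)
    (f : E → ℝ) (hf : Differentiable ℝ f)
    (hconv : ConvexOn ℝ Set.univ (fun w => f w + (l/2) * ‖w‖^2))
    (hlip : ∀ y₁ y₂, ‖gradient f y₁ - gradient f y₂‖ ≤ L * ‖y₁ - y₂‖)
    (U U' V X : E)
    (hgU' : gradient f U' = (1/γ) • (X - U'))
    (hgU : gradient f U = (1/γ) • (X - V)) :
    (f U' - (1/(2*γ))*‖U' - V‖^2 + (1/γ)*⟪X - (α-1) • U', V - U'⟫_ℝ + ((2-α)/(2*γ))*‖U'‖^2)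
      - (f U - (1/(2*γ))*‖U - V‖^2 + (1/γ)*⟪X - (α-1) • U, V - U⟫_ℝ + ((2-α)/(2*γ))*‖U‖^2)
      ≤ (-(1/2) * (1/γ - l) + (2 - α)/γ + ((2 - α)/(2*γ)) * (-1 + 2*γ*l)
          + ((2 - α)/(2*γ)) * (1 + γ*L)^2) * ‖U' - U‖^2 := by
  have hγ' : γ ≠ 0 := ne_of_gt hγ
  have hd : Differentiable ℝ (fun w : E => f w + (l/2) * ‖w‖^2) := by
    have h2 : ContDiff ℝ 1 (fun w : E => ‖w‖^2) := contDiff_norm_sq ℝ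
    exact hf.add ((h2.differentiable one_ne_zero).const_mul _)
  have hcan : ∀ y : ℝ, γ * ((1/γ) * y) = y := fun y => by field_simp
  -- subgradient inequalities
  have hs1 : f U' + (l/2) * ‖U'‖^2 + ⟪(1/γ) • (X - U') + l • U', U - U'⟫_ℝ
      ≤ f U + (l/2) * ‖U‖^2 := by
    have h := subgrad hd hconv U' U
    rw [grad_reg l f hf U', hgU'] at h
    simpa using h
  have hs2 : f U + (l/2) * ‖U‖^2 + ⟪(1/γ) • (X - V) + l • U, U' - U⟫_ℝ
      ≤ f U' + (l/2) * ‖U'‖^2 := by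
    have h := subgrad hd hconv U U'
    rw [grad_reg l f hf U, hgU] at h
    simpa using h
  have hN2 : ‖U' - U‖ * ‖U' - U‖ = ‖U'‖^2 - 2*⟪U',U⟫_ℝ + ‖U‖^2 := by
    rw [← pow_two, norm_sub_sq_real]
  have hNnn : (0:ℝ) ≤ ‖U'‖^2 - 2*⟪U',U⟫_ℝ + ‖U‖^2 := by
    rw [← hN2]; positivity
  -- Lipschitz fact
  have hl0 : ⟪(1/γ) • (X - U') - (1/γ) • (X - V), U' - U⟫_ℝ ≤ L * (‖U' - U‖ * ‖U' - U‖) := by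
    rw [← hgU', ← hgU]
    calc ⟪gradient f U' - gradient f U, U' - U⟫_ℝ
        ≤ ‖gradient f U' - gradient f U‖ * ‖U' - U‖ := real_inner_le_norm _ _
      _ ≤ L * ‖U' - U‖ * ‖U' - U‖ :=
          mul_le_mul_of_nonneg_right (hlip U' U) (norm_nonneg _)
      _ = L * (‖U' - U‖ * ‖U' - U‖) := by ring
  -- scalar facts
  have FactA : γ*(f U' - f U) ≤ (⟪U',X⟫_ℝ - ⟪U,X⟫_ℝ) - (‖U'‖^2 - ⟪U',U⟫_ℝ)
      + γ*(l/2)*(‖U'‖^2 - 2*⟪U',U⟫_ℝ + ‖U‖^2) := by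
    have h := mul_le_mul_of_nonneg_left hs1 hγ.le
    simp only [inner_add_left, real_inner_smul_left, inner_sub_left, inner_sub_right,
      real_inner_self_eq_norm_sq, real_inner_comm U' U, real_inner_comm U X,
      real_inner_comm U' X, real_inner_comm V X, real_inner_comm V U, real_inner_comm V U'] at h
    linarith [h, hcan ⟪U,X⟫_ℝ, hcan ⟪U',X⟫_ℝ, hcan ⟪V,X⟫_ℝ, hcan ⟪U',U⟫_ℝ,
      hcan ⟪V,U⟫_ℝ, hcan ⟪V,U'⟫_ℝ, hcan (‖U‖^2), hcan (‖U'‖^2)]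
  have FactB : (0:ℝ) ≤ γ*l*(‖U'‖^2 - 2*⟪U',U⟫_ℝ + ‖U‖^2)
      + ((⟪V,U'⟫_ℝ - ⟪V,U⟫_ℝ) - (‖U'‖^2 - ⟪U',U⟫_ℝ)) := by
    have h1 := mul_le_mul_of_nonneg_left hs1 hγ.le
    have h2 := mul_le_mul_of_nonneg_left hs2 hγ.le
    simp only [inner_add_left, real_inner_smul_left, inner_sub_left, inner_sub_right,
      real_inner_self_eq_norm_sq, real_inner_comm U' U, real_inner_comm U X,
      real_inner_comm U' X, real_inner_comm V X, real_inner_comm V U, real_inner_comm V U'] at h1 h2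
    linarith [h1, h2, hcan ⟪U,X⟫_ℝ, hcan ⟪U',X⟫_ℝ, hcan ⟪V,X⟫_ℝ, hcan ⟪U',U⟫_ℝ,
      hcan ⟪V,U⟫_ℝ, hcan ⟪V,U'⟫_ℝ, hcan (‖U‖^2), hcan (‖U'‖^2)]
  have FactC : (0:ℝ) ≤ γ*L*(‖U'‖^2 - 2*⟪U',U⟫_ℝ + ‖U‖^2)
      - ((⟪V,U'⟫_ℝ - ⟪V,U⟫_ℝ) - (‖U'‖^2 - ⟪U',U⟫_ℝ)) := by
    have h := mul_le_mul_of_nonneg_left hl0 hγ.le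
    rw [hN2] at h
    simp only [inner_sub_left, real_inner_smul_left, inner_sub_right,
      real_inner_self_eq_norm_sq, real_inner_comm U' U, real_inner_comm U X,
      real_inner_comm U' X, real_inner_comm V X, real_inner_comm V U, real_inner_comm V U'] at h
    linarith [h, hcan ⟪U,X⟫_ℝ, hcan ⟪U',X⟫_ℝ, hcan ⟪V,X⟫_ℝ, hcan ⟪U',U⟫_ℝ,
      hcan ⟪V,U⟫_ℝ, hcan ⟪V,U'⟫_ℝ, hcan (‖U‖^2), hcan (‖U'‖^2)]
  have hα2' : (0:ℝ) ≤ 2 - α := by linarith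
  have h1 := mul_nonneg hα2' FactC
  have h2 := mul_nonneg hα2' FactB
  have h3 : (0:ℝ) ≤ (2-α) * ((1-γ*L)^2 * (‖U'‖^2 - 2*⟪U',U⟫_ℝ + ‖U‖^2)) :=
    mul_nonneg hα2' (mul_nonneg (sq_nonneg _) hNnn)
  rw [← mul_le_mul_iff_right₀ hγ]
  have hLeq : γ * ((f U' - (1/(2*γ))*‖U' - V‖^2 + (1/γ)*⟪X - (α-1) • U', V - U'⟫_ℝ
        + ((2-α)/(2*γ))*‖U'‖^2)
      - (f U - (1/(2*γ))*‖U - V‖^2 + (1/γ)*⟪X - (α-1) • U, V - U⟫_ℝ + ((2-α)/(2*γ))*‖U‖^2))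
      = γ*(f U' - f U) - (1/2)*(‖U' - V‖^2 - ‖U - V‖^2)
        + (⟪X - (α-1) • U', V - U'⟫_ℝ - ⟪X - (α-1) • U, V - U⟫_ℝ)
        + ((2-α)/2)*(‖U'‖^2 - ‖U‖^2) := by
    field_simp
    ring
  have hReq : γ * ((-(1/2) * (1/γ - l) + (2 - α)/γ + ((2 - α)/(2*γ)) * (-1 + 2*γ*l)
          + ((2 - α)/(2*γ)) * (1 + γ*L)^2) * ‖U' - U‖^2)
      = (-(1 - γ*l)/2 + (2-α) + ((2-α)/2)*(-1+2*γ*l) + ((2-α)/2)*(1+γ*L)^2) * ‖U' - U‖^2 := by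
    field_simp
  rw [hLeq, hReq]
  simp only [norm_sub_sq_real, inner_sub_left, real_inner_smul_left, inner_sub_right,
    real_inner_self_eq_norm_sq, real_inner_comm U' U, real_inner_comm U X,
    real_inner_comm U' X, real_inner_comm V X, real_inner_comm V U, real_inner_comm V U']
  linarith [FactA, h1, h2, h3]

/-- The merit function of the parameterized Douglas–Rachford splitting method. -/
noncomputable def meritFun {n : ℕ} (γ α : ℝ) (f : EuclideanSpace ℝ (Fin n) → ℝ)
    (g : EuclideanSpace ℝ (Fin n) → EReal) (u v x : EuclideanSpace ℝ (Fin n)) : EReal :=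
  (f u : EReal) + g v - (((1/(2*γ)) * ‖u - v‖^2 : ℝ) : EReal)
    + (((1/γ) * ⟪x - (α - 1) • u, v - u⟫_ℝ : ℝ) : EReal)
    + ((((2 - α)/(2*γ)) * ‖u‖^2 : ℝ) : EReal)

/-- the `u`-update decrease estimate for the merit function. -/
theorem pdr_merit_u_update {n : ℕ} (L l γ α : ℝ) (hL : 0 < L) (hγ : 0 < γ) (hγl : γ * l < 1)
    (hα : 3/2 < α ∧ α ≤ 2)
    (f : EuclideanSpace ℝ (Fin n) → ℝ) (g : EuclideanSpace ℝ (Fin n) → EReal)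
    (hf : Differentiable ℝ f)
    (hlip : ∀ y₁ y₂, ‖gradient f y₁ - gradient f y₂‖ ≤ L * ‖y₁ - y₂‖)
    (hconv : ConvexOn ℝ Set.univ (fun w => f w + (l/2) * ‖w‖^2))
    (hg_lsc : LowerSemicontinuous g) (hg_bot : ∀ w, g w ≠ ⊥) (hg_proper : ∃ w, g w ≠ ⊤)
    (u v x : ℕ → EuclideanSpace ℝ (Fin n))
    (hu : ∀ t : ℕ, ∀ w, f (u (t+1)) + (1/(2*γ)) * ‖u (t+1) - x t‖^2
        ≤ f w + (1/(2*γ)) * ‖w - x t‖^2)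
    (hv : ∀ t : ℕ, ∀ w,
        g (v (t+1)) + (((1/(2*γ)) * ‖v (t+1) - (α • u (t+1) - x t)‖^2 : ℝ) : EReal)
        ≤ g w + (((1/(2*γ)) * ‖w - (α • u (t+1) - x t)‖^2 : ℝ) : EReal))
    (hx : ∀ t : ℕ, x (t+1) = x t + v (t+1) - u (t+1)) :
    ∀ t : ℕ, 1 ≤ t → g (v t) ≠ ⊤ →
      meritFun γ α f g (u (t+1)) (v t) (x t) - meritFun γ α f g (u t) (v t) (x t)
        ≤ (((-(1/2) * (1/γ - l) + (2 - α)/γ + ((2 - α)/(2*γ)) * (-1 + 2*γ*l)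
              + ((2 - α)/(2*γ)) * (1 + γ*L)^2) * ‖u (t+1) - u t‖^2 : ℝ) : EReal) := by
  intro t ht hgtop
  obtain ⟨s, rfl⟩ : ∃ s, t = s + 1 := ⟨t - 1, by omega⟩
  have hgU' : gradient f (u (s+1+1)) = (1/γ) • (x (s+1) - u (s+1+1)) :=
    grad_of_min γ hγ f hf (x (s+1)) (u (s+1+1)) (hu (s+1))
  have hgU : gradient f (u (s+1)) = (1/γ) • (x (s+1) - v (s+1)) := by
    rw [grad_of_min γ hγ f hf (x s) (u (s+1)) (hu s)]
    congr 1
    rw [hx s]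
    abel
  have hcore := core γ α l L hγ hα.2 f hf hconv hlip (u (s+1)) (u (s+1+1)) (v (s+1))
    (x (s+1)) hgU' hgU
  have hr : g (v (s+1)) = (((g (v (s+1))).toReal : ℝ) : EReal) :=
    (EReal.coe_toReal hgtop (hg_bot _)).symm
  have hm1 : meritFun γ α f g (u (s+1+1)) (v (s+1)) (x (s+1))
      = ((f (u (s+1+1)) + (g (v (s+1))).toReal - (1/(2*γ)) * ‖u (s+1+1) - v (s+1)‖^2
          + (1/γ) * ⟪x (s+1) - (α - 1) • u (s+1+1), v (s+1) - u (s+1+1)⟫_ℝ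
          + ((2 - α)/(2*γ)) * ‖u (s+1+1)‖^2 : ℝ) : EReal) := by
    rw [meritFun, hr]
    norm_cast
  have hm2 : meritFun γ α f g (u (s+1)) (v (s+1)) (x (s+1))
      = ((f (u (s+1)) + (g (v (s+1))).toReal - (1/(2*γ)) * ‖u (s+1) - v (s+1)‖^2
          + (1/γ) * ⟪x (s+1) - (α - 1) • u (s+1), v (s+1) - u (s+1)⟫_ℝ
          + ((2 - α)/(2*γ)) * ‖u (s+1)‖^2 : ℝ) : EReal) := by
    rw [meritFun, hr]
    norm_cast
  rw [hm1, hm2, ← EReal.coe_sub]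
  exact EReal.coe_le_coe_iff.mpr (by linarith [hcore])
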